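/- Let Δx > 0 and let W : ℝ → ℝ be a polynomial of degree at most 4. For the interface point x_{i+1/2} and the uniform cells I_k = [x_{i+1/2} + (k−i−1)Δx, x_{i+1/2} + (k−i)Δx], define the cell averages W_k = (1/Δx)∫_{I_k} W(x) dx for k = i−1, i, i+1, i+2, and let W_0 = W(x_{i+1/2}) be the interface point value. Then the second derivative at the interface is recovered exactly: W''(x_{i+1/2}) = [−(1/8)(W_{i+2} + W_{i−1}) + (31/8)(W_{i+1} + W_i) − (15/2)W_0]/Δx². -/

import Mathlib

open Polynomial intervalIntegral

/-- For a polynomial `W` of degree at most 4 on uniform cells, the second derivative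
at the interface `x_{i+1/2}` is recovered exactly from the interface point value `W₀`
and the four adjacent cell averages:
`W''(x_{i+1/2}) = [−(1/8)(W_{i+2} + W_{i−1}) + (31/8)(W_{i+1} + W_i) − (15/2)W₀]/Δx²`. -/
theorem interface_second_derivative_from_cell_averages
    (Δx X : ℝ) (hΔx : 0 < Δx)
    (W : Polynomial ℝ) (hW : W.natDegree ≤ 4)
    (Wm1 Wi Wp1 Wp2 W0 : ℝ)
    (hWm1 : Wm1 = (1 / Δx) * ∫ x in (X - 2 * Δx)..(X - Δx), W.eval x)
    (hWi : Wi = (1 / Δx) * ∫ x in (X - Δx)..X, W.eval x)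
    (hWp1 : Wp1 = (1 / Δx) * ∫ x in X..(X + Δx), W.eval x)
    (hWp2 : Wp2 = (1 / Δx) * ∫ x in (X + Δx)..(X + 2 * Δx), W.eval x)
    (hW0 : W0 = W.eval X) :
    (Polynomial.derivative (Polynomial.derivative W)).eval X
      = (-(1 / 8) * (Wp2 + Wm1) + (31 / 8) * (Wp1 + Wi) - (15 / 2) * W0) / Δx ^ 2 := by
  have hrep := Polynomial.as_sum_range' W 5 (by omega)
  set a0 := W.coeff 0; set a1 := W.coeff 1; set a2 := W.coeff 2
  set a3 := W.coeff 3; set a4 := W.coeff 4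
  have heval : ∀ x : ℝ, W.eval x
      = a0 * x^0 + a1 * x^1 + a2 * x^2 + a3 * x^3 + a4 * x^4 := by
    intro x
    conv_lhs => rw [hrep]
    simp [Finset.sum_range_succ, mul_comm]
    rfl
  have hint : ∀ a b : ℝ, (∫ x in a..b, W.eval x)
      = a0 * (b - a) + a1 * ((b^2 - a^2)/2) + a2 * ((b^3 - a^3)/3)
        + a3 * ((b^4 - a^4)/4) + a4 * ((b^5 - a^5)/5) := by
    intro a b
    rw [intervalIntegral.integral_congr (g := fun x =>
        a0 * x^0 + a1 * x^1 + a2 * x^2 + a3 * x^3 + a4 * x^4) (fun x _ => heval x)]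
    have I : ∀ n : ℕ, ∀ c : ℝ, IntervalIntegrable (fun x : ℝ => c * x ^ n)
        MeasureTheory.volume a b :=
      fun n c => (intervalIntegral.intervalIntegrable_pow n).const_mul c
    rw [intervalIntegral.integral_add ((((I 0 a0).add (I 1 a1)).add (I 2 a2)).add (I 3 a3))
          (I 4 a4),
        intervalIntegral.integral_add (((I 0 a0).add (I 1 a1)).add (I 2 a2)) (I 3 a3),
        intervalIntegral.integral_add ((I 0 a0).add (I 1 a1)) (I 2 a2),
        intervalIntegral.integral_add (I 0 a0) (I 1 a1)]
    simp only [intervalIntegral.integral_const_mul, integral_pow]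
    push_cast
    ring
  have hd : (Polynomial.derivative (Polynomial.derivative W)).eval X
      = 2 * a2 + 6 * a3 * X + 12 * a4 * X^2 := by
    conv_lhs => rw [hrep]
    simp only [Finset.sum_range_succ, Finset.sum_range_zero, zero_add, map_add,
      Polynomial.derivative_monomial, Polynomial.eval_add, Polynomial.eval_monomial]
    push_cast
    ring
  rw [hint] at hWm1 hWi hWp1 hWp2
  rw [heval X] at hW0
  rw [hd]
  subst hWm1 hWi hWp1 hWp2 hW0
  field_simp
  ring
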